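/- For the Lagrangian L = ½θ̇² + q ẋ θ̇ + ½ẋ² + ln(e^{−θ}φ̇) on T(G × ℝ) (G the affine group of the line, q a constant), the Hessian with respect to the frame {Ẽ₁, Ẽ₂, X = ∂/∂x} is the matrix [[1 − φ²/φ̇², −φ/φ̇², q], [−φ/φ̇², −1/φ̇², 0], [q, 0, 1]], whose determinant equals (q² − 1)/φ̇². Hence L is regular (on the region φ̇ > 0) if and only if q² ≠ 1, and the upper-left 2×2 block (g_{ab}) has determinant −1/φ̇², hence is always invertible there, with inverse [[1, −φ], [−φ, φ² − φ̇²]]. -/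

import Mathlib

open scoped BigOperators

/-- The fibre Hessian of a Lagrangian `L` at `p ∈ TM`, evaluated on two tangent
vectors: `g(v,w) = v^V(w^V(L))`. -/
noncomputable def fiberHess {E : Type*} [NormedAddCommGroup E] [NormedSpace ℝ E]
    (L : E × E → ℝ) (p : E × E) (v w : E) : ℝ :=
  fderiv ℝ (fun u => fderiv ℝ (fun u' => L (p.1, u')) u w) p.2 v

/-- The Lagrangian `L = ½θ̇² + qẋθ̇ + ½ẋ² + ln(e^{−θ}φ̇)` on `T(G×ℝ)`;
coordinates: `x 0 = θ`, `x 1 = φ`, `x 2 = x` and correspondingly for the fibre. -/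
noncomputable def Laff (q : ℝ) : (Fin 3 → ℝ) × (Fin 3 → ℝ) → ℝ :=
  fun p => (1/2) * (p.2 0)^2 + q * p.2 2 * p.2 0 + (1/2) * (p.2 2)^2
    + Real.log (Real.exp (-(p.1 0)) * p.2 1)

open ContinuousLinearMap in
lemma inner_hasFDeriv (q θ : ℝ) (u : Fin 3 → ℝ) (hu : 0 < u 1) :
    HasFDerivAt (fun u' : Fin 3 → ℝ => (1/2) * (u' 0)^2 + q * u' 2 * u' 0 + (1/2)*(u' 2)^2
      + Real.log (Real.exp (-θ) * u' 1))
      (((u 0 + q * u 2) • proj 0 + (u 1)⁻¹ • proj 1 + (q * u 0 + u 2) • proj 2 :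
        (Fin 3 → ℝ) →L[ℝ] ℝ)) u := by
  have h0 : HasFDerivAt (fun u' : Fin 3 → ℝ => u' 0) (proj 0 : (Fin 3 → ℝ) →L[ℝ] ℝ) u :=
    hasFDerivAt_apply 0 u
  have h1 : HasFDerivAt (fun u' : Fin 3 → ℝ => u' 1) (proj 1 : (Fin 3 → ℝ) →L[ℝ] ℝ) u :=
    hasFDerivAt_apply 1 u
  have h2 : HasFDerivAt (fun u' : Fin 3 → ℝ => u' 2) (proj 2 : (Fin 3 → ℝ) →L[ℝ] ℝ) u :=
    hasFDerivAt_apply 2 u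
  have hc : (0:ℝ) < Real.exp (-θ) := Real.exp_pos _
  have hlog : HasFDerivAt (fun u' : Fin 3 → ℝ => Real.log (Real.exp (-θ) * u' 1))
      ((Real.exp (-θ) * u 1)⁻¹ • (Real.exp (-θ) • proj 1) : (Fin 3 → ℝ) →L[ℝ] ℝ) u :=
    (Real.hasDerivAt_log (by positivity)).comp_hasFDerivAt u (h1.const_mul _)
  have ht := ((((h0.mul h0).const_mul ((1:ℝ)/2)).add ((h2.const_mul q).mul h0)).add
      ((h2.mul h2).const_mul ((1:ℝ)/2))).add hlog
  simp only [pow_two]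
  refine ht.congr_fderiv ?_
  ext w
  simp [smul_smul]
  field_simp
  ring

open ContinuousLinearMap in
lemma fiberHess_formula (q : ℝ) (p : (Fin 3 → ℝ) × (Fin 3 → ℝ)) (hp : 0 < p.2 1)
    (v w : Fin 3 → ℝ) :
    fiberHess (Laff q) p v w
      = (v 0 + q * v 2) * w 0 - v 1 * w 1 / (p.2 1)^2 + (q * v 0 + v 2) * w 2 := by
  have key : ∀ u : Fin 3 → ℝ, 0 < u 1 →
      fderiv ℝ (fun u' => Laff q (p.1, u')) u w
        = (u 0 + q * u 2) * w 0 + (u 1)⁻¹ * w 1 + (q * u 0 + u 2) * w 2 := by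
    intro u hu
    have := (inner_hasFDeriv q (p.1 0) u hu).fderiv
    simp only [Laff]
    rw [this]
    simp
  have h1 : HasFDerivAt (fun u : Fin 3 → ℝ => u 1) (proj 1 : (Fin 3 → ℝ) →L[ℝ] ℝ) p.2 :=
    hasFDerivAt_apply 1 p.2
  have h0 : HasFDerivAt (fun u : Fin 3 → ℝ => u 0) (proj 0 : (Fin 3 → ℝ) →L[ℝ] ℝ) p.2 :=
    hasFDerivAt_apply 0 p.2
  have h2 : HasFDerivAt (fun u : Fin 3 → ℝ => u 2) (proj 2 : (Fin 3 → ℝ) →L[ℝ] ℝ) p.2 :=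
    hasFDerivAt_apply 2 p.2
  have hinv : HasFDerivAt (fun u : Fin 3 → ℝ => (u 1)⁻¹)
      (-(p.2 1 ^ 2)⁻¹ • (proj 1) : (Fin 3 → ℝ) →L[ℝ] ℝ) p.2 :=
    (hasDerivAt_inv (ne_of_gt hp)).comp_hasFDerivAt p.2 h1
  have hh := (((h0.add (h2.const_mul q)).mul_const (w 0)).add (hinv.mul_const (w 1))).add
    (((h0.const_mul q).add h2).mul_const (w 2))
  have heq : (fun u : Fin 3 → ℝ => fderiv ℝ (fun u' => Laff q (p.1, u')) u w)
      =ᶠ[nhds p.2] (fun u : Fin 3 → ℝ =>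
        (u 0 + q * u 2) * w 0 + (u 1)⁻¹ * w 1 + (q * u 0 + u 2) * w 2) := by
    have hopen : IsOpen {u : Fin 3 → ℝ | 0 < u 1} :=
      isOpen_lt continuous_const (continuous_apply 1)
    filter_upwards [hopen.mem_nhds hp] with u hu using key u hu
  rw [fiberHess, heq.fderiv_eq, HasFDerivAt.fderiv (f := fun u : Fin 3 → ℝ =>
    (u 0 + q * u 2) * w 0 + (u 1)⁻¹ * w 1 + (q * u 0 + u 2) * w 2) hh]
  simp
  field_simp
  ring

/-- The Hessian of `L = ½θ̇² + qẋθ̇ + ½ẋ² + ln(e^{−θ}φ̇)` in the frame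
`{Ẽ₁, Ẽ₂, X}` is `[[1−φ²/φ̇², −φ/φ̇², q],[−φ/φ̇², −1/φ̇², 0],[q, 0, 1]]` with
determinant `(q²−1)/φ̇²`; so (on `φ̇ > 0`) `L` is regular iff `q² ≠ 1`, and the
upper-left 2×2 block has determinant `−1/φ̇²` and inverse `[[1, −φ],[−φ, φ²−φ̇²]]`. -/
theorem affine_lagrangian_hessian (q : ℝ) :
    let frame : Fin 3 → (Fin 3 → ℝ) → (Fin 3 → ℝ) :=
      fun a x => ![![1, x 1, 0], ![0, 1, 0], ![0, 0, 1]] a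
    ∀ p : (Fin 3 → ℝ) × (Fin 3 → ℝ), 0 < p.2 1 →
      (Matrix.of (fun a b : Fin 3 => fiberHess (Laff q) p (frame a p.1) (frame b p.1))
        = !![1 - (p.1 1)^2/(p.2 1)^2, -(p.1 1)/(p.2 1)^2, q;
             -(p.1 1)/(p.2 1)^2, -1/(p.2 1)^2, 0;
             q, 0, 1]) ∧
      (!![1 - (p.1 1)^2/(p.2 1)^2, -(p.1 1)/(p.2 1)^2, q;
          -(p.1 1)/(p.2 1)^2, -1/(p.2 1)^2, 0;
          q, 0, 1] : Matrix (Fin 3) (Fin 3) ℝ).det = (q^2 - 1)/(p.2 1)^2 ∧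
      ((!![1 - (p.1 1)^2/(p.2 1)^2, -(p.1 1)/(p.2 1)^2, q;
           -(p.1 1)/(p.2 1)^2, -1/(p.2 1)^2, 0;
           q, 0, 1] : Matrix (Fin 3) (Fin 3) ℝ).det ≠ 0 ↔ q^2 ≠ 1) ∧
      (!![1 - (p.1 1)^2/(p.2 1)^2, -(p.1 1)/(p.2 1)^2;
          -(p.1 1)/(p.2 1)^2, -1/(p.2 1)^2] : Matrix (Fin 2) (Fin 2) ℝ).det
        = -1/(p.2 1)^2 ∧
      (!![(1 : ℝ), -(p.1 1); -(p.1 1), (p.1 1)^2 - (p.2 1)^2] *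
        !![1 - (p.1 1)^2/(p.2 1)^2, -(p.1 1)/(p.2 1)^2;
           -(p.1 1)/(p.2 1)^2, -1/(p.2 1)^2]) = 1 := by
  intro frame p hp
  have hne : p.2 1 ≠ 0 := ne_of_gt hp
  have hdet : (!![1 - (p.1 1)^2/(p.2 1)^2, -(p.1 1)/(p.2 1)^2, q;
          -(p.1 1)/(p.2 1)^2, -1/(p.2 1)^2, 0;
          q, 0, 1] : Matrix (Fin 3) (Fin 3) ℝ).det = (q^2 - 1)/(p.2 1)^2 := by
    rw [Matrix.det_fin_three]
    simp [Matrix.cons_val_zero, Matrix.cons_val_one]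
    field_simp
    ring
  refine ⟨?_, hdet, ?_, ?_, ?_⟩
  · ext a b
    fin_cases a <;> fin_cases b <;>
      simp [frame, fiberHess_formula q p hp, Matrix.of_apply, Matrix.vecHead, Matrix.vecTail] <;>
      (try field_simp) <;> (try ring)
  · rw [hdet]
    rw [div_ne_zero_iff]
    constructor
    · rintro ⟨h, -⟩ h1
      exact h (by rw [h1]; ring)
    · intro h
      exact ⟨sub_ne_zero.2 h, by positivity⟩
  · rw [Matrix.det_fin_two]
    simp
    field_simp
    ring
  · ext i j
    fin_cases i <;> fin_cases j <;>
      simp [Matrix.mul_apply, Fin.sum_univ_two, Matrix.one_apply] <;>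
      (try field_simp) <;> (try ring)
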